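/- For the 2D bicrossproduct model metric g = dr⊗dr + b v⊗v with v = r dt − t dr (b ≠ 0 a real constant, r > 0), the Levi-Civita connection satisfies ∇̂ v = −(2/r) v ⊗ dr and ∇̂ dr = (2b/r) v ⊗ v. -/

import Mathlib

set_option linter.unnecessarySeqFocus false


/-- Partial derivative of `f : (Fin n → ℝ) → ℝ` in the `i`-th coordinate direction. -/
noncomputable def pd {n : ℕ} (i : Fin n) (f : (Fin n → ℝ) → ℝ) (x : Fin n → ℝ) : ℝ :=
  fderiv ℝ f x (Pi.single i 1)

/-- The 2D bicrossproduct-model metric `g = dr⊗dr + b v⊗v` with `v = r dt − t dr`, in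
coordinates `x = (t, r)`: `g_{00} = br²`, `g_{01} = g_{10} = −brt`, `g_{11} = 1 + bt²`. -/
noncomputable def gBic (b : ℝ) (μ ν : Fin 2) (x : Fin 2 → ℝ) : ℝ :=
  if μ = 0 ∧ ν = 0 then b * (x 1)^2
  else if (μ = 0 ∧ ν = 1) ∨ (μ = 1 ∧ ν = 0) then -(b * (x 1) * (x 0))
  else 1 + b * (x 0)^2

/-- The inverse bicrossproduct metric:
`g^{00} = (1+bt²)/(br²)`, `g^{01} = t/r`, `g^{11} = 1`. -/
noncomputable def ginvBic (b : ℝ) (μ ν : Fin 2) (x : Fin 2 → ℝ) : ℝ :=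
  if μ = 0 ∧ ν = 0 then (1 + b * (x 0)^2) / (b * (x 1)^2)
  else if (μ = 0 ∧ ν = 1) ∨ (μ = 1 ∧ ν = 0) then x 0 / x 1
  else 1

/-- Levi-Civita Christoffel symbols of the bicrossproduct metric. -/
noncomputable def ΓBic (b : ℝ) (μ α β : Fin 2) (x : Fin 2 → ℝ) : ℝ :=
  (1/2) * ∑ ν, ginvBic b μ ν x *
    (pd β (gBic b ν α) x + pd α (gBic b ν β) x - pd ν (gBic b α β) x)

/-- Components of the 1-form `v = r dt − t dr`. -/
noncomputable def vComp (α : Fin 2) (x : Fin 2 → ℝ) : ℝ :=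
  if α = 0 then x 1 else -(x 0)

lemma pd_of_hasFDerivAt {n : ℕ} {f : (Fin n → ℝ) → ℝ} {L : (Fin n → ℝ) →L[ℝ] ℝ}
    {x : Fin n → ℝ} (i : Fin n) (h : HasFDerivAt f L x) :
    pd i f x = L (Pi.single i 1) := by rw [pd, h.fderiv]

lemma hcoord {n : ℕ} (j : Fin n) (x : Fin n → ℝ) :
    HasFDerivAt (𝕜 := ℝ) (fun y : Fin n → ℝ => y j)
      (ContinuousLinearMap.proj j) x :=
  (ContinuousLinearMap.proj j : (Fin n → ℝ) →L[ℝ] ℝ).hasFDerivAt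

lemma pd_const {n : ℕ} (i : Fin n) (c : ℝ) (x : Fin n → ℝ) :
    pd i (fun _ => c) x = 0 := by
  simp [pd, fderiv_const]

lemma pd_g00 (b : ℝ) (i : Fin 2) (x : Fin 2 → ℝ) :
    pd i (fun y => b * (y 1)^2) x = if i = 1 then 2 * b * x 1 else 0 := by
  simp only [pow_two]
  rw [pd_of_hasFDerivAt i (((hcoord 1 x).fun_mul (hcoord 1 x)).const_mul b)]
  fin_cases i <;> simp [Pi.single_apply] <;> ring

lemma pd_g01 (b : ℝ) (i : Fin 2) (x : Fin 2 → ℝ) :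
    pd i (fun y => -(b * y 1 * y 0)) x
      = if i = 0 then -(b * x 1) else -(b * x 0) := by
  rw [pd_of_hasFDerivAt i ((((hcoord 1 x).const_mul b).fun_mul (hcoord 0 x)).fun_neg)]
  fin_cases i <;> simp [Pi.single_apply] <;> ring

lemma pd_g11 (b : ℝ) (i : Fin 2) (x : Fin 2 → ℝ) :
    pd i (fun y => 1 + b * (y 0)^2) x = if i = 0 then 2 * b * x 0 else 0 := by
  simp only [pow_two]
  rw [pd_of_hasFDerivAt i ((((hcoord 0 x).fun_mul (hcoord 0 x)).const_mul b).const_add 1)]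
  fin_cases i <;> simp [Pi.single_apply] <;> ring

lemma pd_gBic (b : ℝ) (i μ ν : Fin 2) (x : Fin 2 → ℝ) :
    pd i (gBic b μ ν) x =
      if μ = 0 ∧ ν = 0 then (if i = 1 then 2 * b * x 1 else 0)
      else if (μ = 0 ∧ ν = 1) ∨ (μ = 1 ∧ ν = 0) then
        (if i = 0 then -(b * x 1) else -(b * x 0))
      else (if i = 0 then 2 * b * x 0 else 0) := by
  fin_cases μ <;> fin_cases ν <;>
    simp only [Fin.mk_zero, Fin.mk_one, Fin.isValue, show (0:Fin 2) ≠ 1 by decide, show (1:Fin 2) ≠ 0 by decide,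
      and_true, true_and, and_false, false_and, and_self, if_true, if_false,
      or_true, true_or, or_false, false_or, not_true, not_false_iff] <;>
  · first
    | (rw [show gBic b 0 0 = fun y => b * (y 1)^2 from funext fun y => by simp [gBic]]
       exact pd_g00 b i x)
    | (rw [show gBic b 0 1 = fun y => -(b * y 1 * y 0) from funext fun y => by simp [gBic]]
       exact pd_g01 b i x)
    | (rw [show gBic b 1 0 = fun y => -(b * y 1 * y 0) from funext fun y => by simp [gBic]]
       exact pd_g01 b i x)
    | (rw [show gBic b 1 1 = fun y => 1 + b * (y 0)^2 from funext fun y => by simp [gBic]]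
       exact pd_g11 b i x)

lemma pd_vComp (i α : Fin 2) (x : Fin 2 → ℝ) :
    pd i (vComp α) x =
      if α = 0 then (if i = 1 then (1:ℝ) else 0) else (if i = 0 then -1 else 0) := by
  fin_cases α <;> simp only [Fin.mk_zero, Fin.mk_one, Fin.isValue, id_eq]
  · rw [show vComp 0 = fun y => y 1 from funext fun y => by simp [vComp]]
    rw [pd_of_hasFDerivAt i (hcoord 1 x)]
    fin_cases i <;> simp [Pi.single_apply]
  · rw [show vComp 1 = fun y => -(y 0) from funext fun y => by simp [vComp]]
    rw [pd_of_hasFDerivAt i (hcoord 0 x).fun_neg]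
    fin_cases i <;> simp [Pi.single_apply]

/-- For the 2D bicrossproduct model the Levi-Civita connection satisfies
`∇̂ v = −(2/r) v ⊗ dr` and `∇̂ dr = (2b/r) v ⊗ v`, stated componentwise as
`(∇̂_β ω)_α = ∂_β ω_α − Γ̂^γ_{βα} ω_γ`. -/
theorem stmt14 (b : ℝ) (hb : b ≠ 0) :
    ∀ x : Fin 2 → ℝ, 0 < x 1 → ∀ α β : Fin 2,
      (pd β (vComp α) x - (∑ γ, ΓBic b γ β α x * vComp γ x)
        = -(2 / x 1) * vComp β x * (if α = 1 then (1:ℝ) else 0)) ∧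
      (pd β (fun _ => if α = (1 : Fin 2) then (1:ℝ) else 0) x
          - (∑ γ, ΓBic b γ β α x * (if γ = 1 then (1:ℝ) else 0))
        = (2 * b / x 1) * vComp β x * vComp α x) := by
  intro x hr α β
  have hr' : x 1 ≠ 0 := ne_of_gt hr
  fin_cases α <;> fin_cases β <;>
    constructor <;>
  · simp only [ΓBic, Fin.sum_univ_two, pd_gBic, pd_vComp, pd_const, ginvBic, vComp]
    norm_num
    field_simp
    ring
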